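/- For finite sets R, B ⊆ ℝ² with |R| = |B| = n and R ∪ B in general position, there exists a perfect bichromatic matching (a bijection from R to B) whose n straight segments are pairwise non-crossing. -/
import Mathlib


/-- The Euclidean plane. -/
abbrev Plane := EuclideanSpace ℝ (Fin 2)

/-- A set of points is in general position if no three distinct points are collinear. -/
def GenPos (P : Set Plane) : Prop :=
  ∀ p ∈ P, ∀ q ∈ P, ∀ r ∈ P, p ≠ q → p ≠ r → q ≠ r →
    ¬ Collinear ℝ ({p, q, r} : Set Plane)

/-- Two segments cross if their relative interiors (open segments) intersect. -/
def Cross (a b c d : Plane) : Prop :=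
  (openSegment ℝ a b ∩ openSegment ℝ c d).Nonempty

/-- `M` is a perfect matching of `P`: each edge joins two distinct points of `P`,
and every point of `P` lies on exactly one edge. -/
def IsPerfectMatching (P : Finset Plane) (M : Finset (Plane × Plane)) : Prop :=
  (∀ e ∈ M, e.1 ∈ P ∧ e.2 ∈ P ∧ e.1 ≠ e.2) ∧
  (∀ p ∈ P, ∃! e, e ∈ M ∧ (p = e.1 ∨ p = e.2))

/-- No two distinct segments of `M` cross. -/
def NonCrossing (M : Finset (Plane × Plane)) : Prop :=
  ∀ e ∈ M, ∀ f ∈ M, e ≠ f → ¬ Cross e.1 e.2 f.1 f.2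

/-- If `a` and `b` both lie on the line through `r` and `x` (with `x ≠ r`), then
`r`, `a`, `b` are collinear. -/
lemma collinear_of_wbtw_wbtw {r x a b : Plane} (hxr : r ≠ x)
    (h1 : Wbtw ℝ r x a) (h2 : Wbtw ℝ r x b) : Collinear ℝ ({r, a, b} : Set Plane) := by
  have c1 : Collinear ℝ ({r, x, a} : Set Plane) := h1.collinear
  have c2 : Collinear ℝ ({r, x, b} : Set Plane) := h2.collinear
  have ha : a ∈ line[ℝ, r, x] :=
    c1.mem_affineSpan_of_mem_of_ne (by simp) (by simp) (by simp) hxr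
  have hb : b ∈ line[ℝ, r, x] :=
    c2.mem_affineSpan_of_mem_of_ne (by simp) (by simp) (by simp) hxr
  have := collinear_insert_insert_of_mem_affineSpan_pair ha hb
  refine this.subset ?_
  intro p hp
  rcases hp with rfl | rfl | rfl
  · exact Or.inr (Or.inr (Or.inl rfl))
  · exact Or.inl rfl
  · exact Or.inr (Or.inl rfl)

/-- Key geometric fact: if the segments `[r, a]` and `[r', a']` cross, and no bad
collinearity occurs, then swapping strictly decreases total length. -/
lemma swap_dist_lt {r a r' a' x : Plane}
    (hra : r ≠ a) (hra' : r' ≠ a')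
    (hc1 : ¬ Collinear ℝ ({r, a, a'} : Set Plane))
    (hc2 : ¬ Collinear ℝ ({r', a', a} : Set Plane))
    (hx1 : x ∈ openSegment ℝ r a) (hx2 : x ∈ openSegment ℝ r' a') :
    dist r a' + dist r' a < dist r a + dist r' a' := by
  have hxr : r ≠ x := by
    rintro rfl
    exact hra (left_mem_openSegment_iff.mp hx1)
  have hxr' : r' ≠ x := by
    rintro rfl
    exact hra' (left_mem_openSegment_iff.mp hx2)
  have w1 : Wbtw ℝ r x a := mem_segment_iff_wbtw.mp (openSegment_subset_segment ℝ _ _ hx1)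
  have w2 : Wbtw ℝ r' x a' := mem_segment_iff_wbtw.mp (openSegment_subset_segment ℝ _ _ hx2)
  have d1 : dist r x + dist x a = dist r a := dist_add_dist_eq_iff.mpr w1
  have d2 : dist r' x + dist x a' = dist r' a' := dist_add_dist_eq_iff.mpr w2
  have t1 : dist r a' < dist r x + dist x a' := by
    refine lt_of_le_of_ne (dist_triangle _ _ _) fun h => hc1 ?_
    have w : Wbtw ℝ r x a' := dist_add_dist_eq_iff.mp h.symm
    exact collinear_of_wbtw_wbtw hxr w1 w
  have t2 : dist r' a ≤ dist r' x + dist x a := dist_triangle _ _ _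
  linarith

theorem exists_noncrossing_bichromatic_matching (n : ℕ) (R B : Finset Plane)
    (hR : R.card = n) (hB : B.card = n) (hdisj : Disjoint R B)
    (hgp : GenPos (↑R ∪ ↑B : Set Plane)) :
    ∃ f : Plane → Plane, Set.BijOn f ↑R ↑B ∧
      ∀ r ∈ R, ∀ r' ∈ R, r ≠ r' → ¬ Cross r (f r) r' (f r') := by
  classical
  -- there is at least one bijection between `R` and `B`
  have hcard : Fintype.card ↥R = Fintype.card ↥B := by
    simp [Fintype.card_coe, hR, hB]
  have hne : Nonempty (↥R ≃ ↥B) := ⟨Fintype.equivOfCardEq hcard⟩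
  -- choose a bijection of minimal total length
  set cost : (↥R ≃ ↥B) → ℝ := fun e => ∑ r : ↥R, dist (r : Plane) ((e r : Plane)) with hcost
  obtain ⟨e, -, hemin⟩ :=
    Finset.exists_min_image (Finset.univ : Finset (↥R ≃ ↥B)) cost
      ⟨hne.some, Finset.mem_univ _⟩
  refine ⟨fun p => if h : p ∈ R then ((e ⟨p, h⟩ : ↥B) : Plane) else p, ?_, ?_⟩
  · refine ⟨?_, ?_, ?_⟩
    · intro p hp
      simp only [Finset.mem_coe] at hp
      simp only [hp, dif_pos]
      exact (e ⟨p, hp⟩).2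
    · intro p hp q hq hpq
      simp only [Finset.mem_coe] at hp hq
      simp only [hp, hq, dif_pos] at hpq
      exact Subtype.ext_iff.mp (e.injective (Subtype.ext hpq))
    · intro b hb
      simp only [Finset.mem_coe] at hb
      refine ⟨(e.symm ⟨b, hb⟩ : Plane), (e.symm ⟨b, hb⟩).2, ?_⟩
      simp only [(e.symm ⟨b, hb⟩).2, dif_pos]
      have : e (e.symm ⟨b, hb⟩) = ⟨b, hb⟩ := e.apply_symm_apply _
      simp [Subtype.coe_eta, this]
  · -- non-crossing
    intro r hr r' hr' hrr' hcross
    obtain ⟨x, hx1, hx2⟩ := hcross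
    simp only [hr, hr', dif_pos] at hx1 hx2
    set a : Plane := (e ⟨r, hr⟩ : Plane) with ha
    set a' : Plane := (e ⟨r', hr'⟩ : Plane) with ha'
    have haB : a ∈ B := (e ⟨r, hr⟩).2
    have ha'B : a' ∈ B := (e ⟨r', hr'⟩).2
    have haa' : a ≠ a' := by
      intro h
      exact hrr' (Subtype.ext_iff.mp (e.injective (Subtype.ext h)))
    have hdRB : ∀ p ∈ R, ∀ q ∈ B, p ≠ q := by
      intro p hp q hq h
      exact Finset.disjoint_left.mp hdisj hp (h ▸ hq)
    have hra : r ≠ a := hdRB r hr a haB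
    have hra' : r' ≠ a' := hdRB r' hr' a' ha'B
    have memU : ∀ p ∈ R, (p : Plane) ∈ (↑R ∪ ↑B : Set Plane) := fun p hp => Or.inl hp
    have memU' : ∀ p ∈ B, (p : Plane) ∈ (↑R ∪ ↑B : Set Plane) := fun p hp => Or.inr hp
    have hc1 : ¬ Collinear ℝ ({r, a, a'} : Set Plane) :=
      hgp r (memU r hr) a (memU' a haB) a' (memU' a' ha'B) hra (hdRB r hr a' ha'B) haa'
    have hc2 : ¬ Collinear ℝ ({r', a', a} : Set Plane) :=
      hgp r' (memU r' hr') a' (memU' a' ha'B) a (memU' a haB) hra' (hdRB r' hr' a haB) haa'.symm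
    have hlt := swap_dist_lt hra hra' hc1 hc2 hx1 hx2
    -- swapping gives a cheaper matching, contradiction
    set e' : ↥R ≃ ↥B := e.trans (Equiv.swap (e ⟨r, hr⟩) (e ⟨r', hr'⟩)) with he'
    have hkey : cost e' < cost e := by
      have hab : (⟨r, hr⟩ : ↥R) ≠ ⟨r', hr'⟩ := fun h => hrr' (Subtype.ext_iff.mp h)
      have hg : ∀ i : ↥R, i ≠ ⟨r, hr⟩ → i ≠ ⟨r', hr'⟩ →
          dist (i : Plane) ((e' i : Plane)) = dist (i : Plane) ((e i : Plane)) := by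
        intro i h1 h2
        have : e' i = e i := by
          simp only [he', Equiv.trans_apply]
          exact Equiv.swap_apply_of_ne_of_ne (fun h => h1 (e.injective h))
            (fun h => h2 (e.injective h))
        rw [this]
      have hgr : (e' ⟨r, hr⟩ : Plane) = a' := by
        simp [he', Equiv.trans_apply, Equiv.swap_apply_left, ha']
      have hgr' : (e' ⟨r', hr'⟩ : Plane) = a := by
        simp [he', Equiv.trans_apply, Equiv.swap_apply_right, ha]
      -- compare the two sums
      have hsum : cost e - cost e' =
          ∑ i : ↥R, (dist (i : Plane) ((e i : Plane)) - dist (i : Plane) ((e' i : Plane))) := by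
        rw [Finset.sum_sub_distrib]
      have hsum2 : ∑ i : ↥R,
          (dist (i : Plane) ((e i : Plane)) - dist (i : Plane) ((e' i : Plane))) =
          ∑ i ∈ ({⟨r, hr⟩, ⟨r', hr'⟩} : Finset ↥R),
          (dist (i : Plane) ((e i : Plane)) - dist (i : Plane) ((e' i : Plane))) := by
        symm
        refine Finset.sum_subset (Finset.subset_univ _) ?_
        intro i _ hi
        simp only [Finset.mem_insert, Finset.mem_singleton, not_or] at hi
        rw [hg i hi.1 hi.2]
        ring
      rw [Finset.sum_pair hab] at hsum2
      rw [hgr, hgr'] at hsum2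
      have : cost e - cost e' = (dist r a - dist r a') + (dist r' a' - dist r' a) := by
        rw [hsum, hsum2]
      linarith
    exact absurd (hemin e' (Finset.mem_univ _)) (not_le.mpr hkey)
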